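/- Consider the Karma ODE with I = 0, parameters ε > 0, 0 < n_B < 1 and integer M ≥ 1. The equilibria lying on the E-axis (n = 0) are exactly (0,0) and (E_s, 0), where E_s = 2 − (2/3)√6 is the unique root in (0,1) of −1 + 3E − (3/4)E² = 0. Moreover ∂f/∂E(0,0) = −1 < 0 and ∂f/∂E(E_s,0) = −1 + 3(2E_s − (3/4)E_s²) > 0; since for E < 1 the slow equation reduces to n' = −εn, for every ε > 0 the Jacobian at (0,0) has eigenvalues −1 and −ε (a stable node) and the Jacobian at (E_s,0) has one positive and one negative eigenvalue (a saddle). -/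

import Mathlib

open Real

lemma eig_upper_left (a b d : ℝ) :
    Module.End.HasEigenvalue (Matrix.toLin' (!![a, b; 0, d])) a := by
  apply Module.End.hasEigenvalue_of_hasEigenvector (x := ![1, 0])
  constructor
  · rw [Module.End.mem_eigenspace_iff]
    funext i
    fin_cases i <;> simp [Matrix.toLin'_apply, Matrix.mulVec, dotProduct]
  · intro h
    have := congrFun h 0
    simp at this

lemma eig_diag_right (a d : ℝ) :
    Module.End.HasEigenvalue (Matrix.toLin' (!![a, 0; 0, d])) d := by
  apply Module.End.hasEigenvalue_of_hasEigenvector (x := ![0, 1])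
  constructor
  · rw [Module.End.mem_eigenspace_iff]
    funext i
    fin_cases i <;> simp [Matrix.toLin'_apply, Matrix.mulVec, dotProduct]
  · intro h
    have := congrFun h 1
    simp at this

lemma eig_upper_right (a b d : ℝ) (h : a ≠ d) :
    Module.End.HasEigenvalue (Matrix.toLin' (!![a, b; 0, d])) d := by
  apply Module.End.hasEigenvalue_of_hasEigenvector (x := ![b / (d - a), 1])
  constructor
  · rw [Module.End.mem_eigenspace_iff]
    funext i
    have hda : d - a ≠ 0 := sub_ne_zero.mpr (Ne.symm h)
    fin_cases i <;> simp [Matrix.toLin'_apply, Matrix.mulVec, dotProduct] <;>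
      field_simp <;> ring
  · intro h
    have := congrFun h 1
    simp at this

/-- For the Karma ODE with `I = 0` (`ε > 0`, `0 < n_B < 1`, `M ≥ 1`): the
equilibria on the `E`-axis are exactly `(0,0)` and `(E_s,0)` with
`E_s = 2 - (2/3)√6`, the unique root in `(0,1)` of `-1 + 3E - (3/4)E² = 0`;
`∂f/∂E(E,0) = -1 + 3(2E - (3/4)E²)` is negative at `0` and positive at `E_s`;
and since the slow equation reduces to `n' = -εn` for `E < 1`, the Jacobian at
`(0,0)` has eigenvalues `-1` and `-ε` (a stable node), while the Jacobian at
`(E_s,0)` has eigenvalues `-1 + 3(2E_s - (3/4)E_s²) > 0` and `-ε < 0`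
(a saddle). -/
theorem karma_E_axis_equilibria (M : ℕ) (hM : 1 ≤ M) (nB : ℝ)
    (hnB0 : 0 < nB) (hnB1 : nB < 1) (f : ℝ → ℝ → ℝ)
    (hf : ∀ E n, f E n = -E + 2 * (3 / 2 - n ^ M) * (E ^ 2 - E ^ 3 / 4))
    (Es : ℝ) (hEs : Es = 2 - (2 / 3) * Real.sqrt 6) :
    -- E-axis equilibria are exactly (0,0) and (Es,0)
    ({E : ℝ | f E 0 = 0 ∧ (1 / nB) * max (E - 1) 0 - 0 = 0} = {0, Es}) ∧
    -- Es is the unique root in (0,1) of -1 + 3E - (3/4)E² = 0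
    (0 < Es ∧ Es < 1 ∧ -1 + 3 * Es - (3 / 4) * Es ^ 2 = 0) ∧
    (∀ E : ℝ, 0 < E → E < 1 → -1 + 3 * E - (3 / 4) * E ^ 2 = 0 → E = Es) ∧
    -- the fast-variable partial derivative along n = 0 and its signs
    (∀ E : ℝ, HasDerivAt (fun E' => f E' 0)
      (-1 + 3 * (2 * E - (3 / 4) * E ^ 2)) E) ∧
    ((-1 + 3 * (2 * (0:ℝ) - (3 / 4) * (0:ℝ) ^ 2)) < 0) ∧
    (0 < -1 + 3 * (2 * Es - (3 / 4) * Es ^ 2)) ∧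
    -- eigenvalues of the Jacobians (triangular matrices)
    (∀ ε : ℝ, 0 < ε →
      Module.End.HasEigenvalue
        (Matrix.toLin' (!![(-1 : ℝ), 0; 0, -ε])) (-1) ∧
      Module.End.HasEigenvalue
        (Matrix.toLin' (!![(-1 : ℝ), 0; 0, -ε])) (-ε) ∧
      Module.End.HasEigenvalue
        (Matrix.toLin'
          (!![(-1 + 3 * (2 * Es - (3 / 4) * Es ^ 2) : ℝ),
              -2 * (M : ℝ) * (0 : ℝ) ^ (M - 1) * (Es ^ 2 - Es ^ 3 / 4);
              0, -ε]))
        (-1 + 3 * (2 * Es - (3 / 4) * Es ^ 2)) ∧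
      Module.End.HasEigenvalue
        (Matrix.toLin'
          (!![(-1 + 3 * (2 * Es - (3 / 4) * Es ^ 2) : ℝ),
              -2 * (M : ℝ) * (0 : ℝ) ^ (M - 1) * (Es ^ 2 - Es ^ 3 / 4);
              0, -ε]))
        (-ε) ∧
      0 < -1 + 3 * (2 * Es - (3 / 4) * Es ^ 2) ∧ -ε < 0) := by
  have hM0 : M ≠ 0 := by omega
  have hzp : (0 : ℝ) ^ M = 0 := zero_pow hM0
  have hs2 : Real.sqrt 6 ^ 2 = 6 := Real.sq_sqrt (by norm_num)
  have hs_lb : (2 : ℝ) < Real.sqrt 6 := by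
    have := Real.lt_sqrt (x := 2) (y := 6) (by norm_num)
    exact this.mpr (by norm_num)
  have hs_ub : Real.sqrt 6 < 3 := by
    have := Real.sqrt_lt' (x := 6) (y := 3) (by norm_num)
    exact this.mpr (by norm_num)
  have hEs_pos : 0 < Es := by rw [hEs]; nlinarith
  have hEs_lt1 : Es < 1 := by rw [hEs]; nlinarith
  have hEs_root : -1 + 3 * Es - (3 / 4) * Es ^ 2 = 0 := by
    rw [hEs]; nlinarith [hs2]
  have hf0 : ∀ E : ℝ, f E 0 = E * (-1 + 3 * E - (3 / 4) * E ^ 2) := by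
    intro E; rw [hf, hzp]; ring
  have hderiv_pos : 0 < -1 + 3 * (2 * Es - (3 / 4) * Es ^ 2) := by
    rw [hEs]; nlinarith [hs2]
  refine ⟨?_, ⟨hEs_pos, hEs_lt1, hEs_root⟩, ?_, ?_, by norm_num, hderiv_pos, ?_⟩
  · ext E
    simp only [Set.mem_setOf_eq, Set.mem_insert_iff, Set.mem_singleton_iff]
    constructor
    · rintro ⟨h1, h2⟩
      rw [hf0] at h1
      have hle : E ≤ 1 := by
        by_contra h
        push_neg at h
        have hmax : max (E - 1) 0 = E - 1 := max_eq_left (by linarith)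
        rw [hmax] at h2
        have : (1 / nB) * (E - 1) > 0 := mul_pos (by positivity) (by linarith)
        linarith
      rcases mul_eq_zero.mp h1 with h | h
      · left; exact h
      · right
        rw [hEs]
        nlinarith [hs2, hs_lb]
    · rintro (rfl | rfl)
      · simp [hf0]
      · constructor
        · rw [hf0, hEs_root]; ring
        · rw [max_eq_right (by linarith), mul_zero, sub_zero]
  · intro E hE0 hE1 hroot
    rw [hEs]
    nlinarith [hs2, hs_lb]
  · intro E
    have hfun : (fun E' => f E' 0) = fun E' => -E' + 3 * E' ^ 2 - (3 / 4) * E' ^ 3 := by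
      funext E'; rw [hf, hzp]; ring
    rw [hfun]
    have h1 : HasDerivAt (fun E' : ℝ => -E' + 3 * E' ^ 2 - (3 / 4) * E' ^ 3)
        (-1 + 3 * (2 * E ^ 1) - (3 / 4) * (3 * E ^ 2)) E := by
      have := ((hasDerivAt_id E).neg.add
        (((hasDerivAt_pow 2 E)).const_mul 3)).sub
        (((hasDerivAt_pow 3 E)).const_mul (3 / 4))
      simp at this
      rw [pow_one]
      exact this.congr_of_eventuallyEq (Filter.Eventually.of_forall fun x => by
        simp only [Pi.add_apply, Pi.sub_apply, Pi.neg_apply, id])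
    convert h1 using 1
    ring
  · intro ε hε
    have hne1 : (-1 + 3 * (2 * Es - (3 / 4) * Es ^ 2) : ℝ) ≠ -ε := by
      intro h; nlinarith
    exact ⟨eig_upper_left _ _ _, eig_diag_right _ _,
      eig_upper_left _ _ _, eig_upper_right _ _ _ hne1, hderiv_pos, by linarith⟩
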